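/- Let G be a connected (2t)-regular simple graph, where t ≥ 1. Then the triangle-multiplier graph 𝓜₃(G) is a nut graph. -/

import Mathlib

open scoped Classical

/-- A *nut graph*: a finite simple graph on at least 2 vertices whose real adjacency
matrix has nullity (kernel dimension) exactly 1 and such that every nonzero vector in
the kernel of the adjacency matrix has all entries nonzero. -/
def SimpleGraph.IsNut {V : Type*} [Fintype V] (G : SimpleGraph V) : Prop :=
  2 ≤ Fintype.card V ∧
  Module.finrank ℝ (LinearMap.ker (Matrix.mulVecLin (G.adjMatrix ℝ))) = 1 ∧
  ∀ x : V → ℝ, Matrix.mulVecLin (G.adjMatrix ℝ) x = 0 → x ≠ 0 → ∀ v : V, x v ≠ 0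

/-- The automorphism group of a simple graph, realised as the subgroup of the
permutations of the vertex set that preserve adjacency (and non-adjacency). -/
def SimpleGraph.autGroup {V : Type*} (G : SimpleGraph V) : Subgroup (Equiv.Perm V) where
  carrier := { σ | ∀ u v : V, G.Adj (σ u) (σ v) ↔ G.Adj u v }
  mul_mem' := by
    intro σ τ hσ hτ u v
    simpa [hσ (τ u) (τ v)] using hτ u v
  one_mem' := by intro u v; rfl
  inv_mem' := by
    intro σ hσ u v
    have := hσ (σ⁻¹ u) (σ⁻¹ v)
    simpa using this.symm

/-- The triangle-multiplier graph `𝓜₃(G)`: obtained from `G` by fusing a bouquet of `t`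
triangles to every vertex of `G`.  Its vertex set is `V ⊕ (V × Fin t × Fin 2)`; vertex `v`
is joined to the two new vertices `(v, j, 0)` and `(v, j, 1)` of each of its `t` triangles,
and these two are joined to each other. -/
def SimpleGraph.triangleMultiplier {V : Type*} (G : SimpleGraph V) (t : ℕ) :
    SimpleGraph (V ⊕ V × Fin t × Fin 2) where
  Adj x y :=
    match x, y with
    | Sum.inl u, Sum.inl v => G.Adj u v
    | Sum.inl u, Sum.inr p => u = p.1
    | Sum.inr p, Sum.inl u => u = p.1
    | Sum.inr p, Sum.inr q => p.1 = q.1 ∧ p.2.1 = q.2.1 ∧ p.2.2 ≠ q.2.2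
  symm := by
    constructor
    rintro (u | p) (v | q) h
    · exact G.adj_symm h
    · exact h
    · exact h
    · exact ⟨h.1.symm, h.2.1.symm, h.2.2.symm⟩
  loopless := by
    constructor
    rintro (u | p) h
    · exact G.irrefl h
    · exact h.2.2 rfl

lemma tm_mulVec_inl {V : Type*} [Fintype V] (G : SimpleGraph V) (t : ℕ)
    (x : (V ⊕ V × Fin t × Fin 2) → ℝ) (v : V) :
    ((G.triangleMultiplier t).adjMatrix ℝ).mulVec x (Sum.inl v)
      = (∑ u ∈ G.neighborFinset v, x (Sum.inl u))
        + ∑ j : Fin t, ∑ k : Fin 2, x (Sum.inr (v, j, k)) := by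
  rw [SimpleGraph.neighborFinset_eq_filter]
  have h1 : ∀ a b : V, (G.triangleMultiplier t).Adj (Sum.inl a) (Sum.inl b) ↔ G.Adj a b :=
    fun _ _ => Iff.rfl
  have h2 : ∀ (a : V) (p : V × Fin t × Fin 2),
      (G.triangleMultiplier t).Adj (Sum.inl a) (Sum.inr p) ↔ a = p.1 := fun _ _ => Iff.rfl
  have h3 : ∀ (p : V × Fin t × Fin 2) (a : V),
      (G.triangleMultiplier t).Adj (Sum.inr p) (Sum.inl a) ↔ a = p.1 := fun _ _ => Iff.rfl
  have h4 : ∀ p q : V × Fin t × Fin 2, (G.triangleMultiplier t).Adj (Sum.inr p) (Sum.inr q) ↔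
      p.1 = q.1 ∧ p.2.1 = q.2.1 ∧ p.2.2 ≠ q.2.2 := fun _ _ => Iff.rfl
  simp only [Matrix.mulVec, dotProduct, Fintype.sum_sum_type, SimpleGraph.adjMatrix_apply,
    h1, h2, h3, h4, ite_mul, one_mul, zero_mul]
  simp [Matrix.mulVec, dotProduct, Fintype.sum_sum_type, Fintype.sum_prod_type,
    SimpleGraph.triangleMultiplier, ite_mul, Finset.sum_ite_eq, Finset.sum_filter, SimpleGraph.adjMatrix_apply]
  rw [Finset.sum_comm]
  simp [Finset.sum_add_distrib, Finset.sum_ite_eq]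

lemma tm_mulVec_inr {V : Type*} [Fintype V] (G : SimpleGraph V) (t : ℕ)
    (x : (V ⊕ V × Fin t × Fin 2) → ℝ) (v : V) (j : Fin t) (k : Fin 2) :
    ((G.triangleMultiplier t).adjMatrix ℝ).mulVec x (Sum.inr (v, j, k))
      = x (Sum.inl v) + x (Sum.inr (v, j, k + 1)) := by
  have h1 : ∀ a b : V, (G.triangleMultiplier t).Adj (Sum.inl a) (Sum.inl b) ↔ G.Adj a b :=
    fun _ _ => Iff.rfl
  have h2 : ∀ (a : V) (p : V × Fin t × Fin 2),
      (G.triangleMultiplier t).Adj (Sum.inl a) (Sum.inr p) ↔ a = p.1 := fun _ _ => Iff.rfl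
  have h3 : ∀ (p : V × Fin t × Fin 2) (a : V),
      (G.triangleMultiplier t).Adj (Sum.inr p) (Sum.inl a) ↔ a = p.1 := fun _ _ => Iff.rfl
  have h4 : ∀ p q : V × Fin t × Fin 2, (G.triangleMultiplier t).Adj (Sum.inr p) (Sum.inr q) ↔
      p.1 = q.1 ∧ p.2.1 = q.2.1 ∧ p.2.2 ≠ q.2.2 := fun _ _ => Iff.rfl
  simp only [Matrix.mulVec, dotProduct, Fintype.sum_sum_type, SimpleGraph.adjMatrix_apply,
    h1, h2, h3, h4, ite_mul, one_mul, zero_mul]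
  simp [Matrix.mulVec, dotProduct, Fintype.sum_sum_type, Fintype.sum_prod_type,
    SimpleGraph.triangleMultiplier, ite_mul, ite_and, Finset.sum_ite_eq, Fin.sum_univ_two,
    SimpleGraph.adjMatrix_apply]
  fin_cases k <;> simp [ite_and, Finset.sum_ite_eq]

lemma const_of_regular {V : Type*} [Fintype V] {G : SimpleGraph V} {d : ℕ}
    (hconn : G.Connected) (hreg : G.IsRegularOfDegree d) (f : V → ℝ)
    (hf : ∀ v, ∑ u ∈ G.neighborFinset v, f u = d * f v) :
    ∀ v w : V, f v = f w := by
  have hne : Nonempty V := hconn.nonempty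
  obtain ⟨vmax, -, hmax⟩ := Finset.exists_max_image Finset.univ f ⟨hne.some, Finset.mem_univ _⟩
  have key : ∀ {v u : V}, f v = f vmax → G.Adj v u → f u = f vmax := by
    intro v u hv hadj
    have hsum0 : ∑ u' ∈ G.neighborFinset v, (f vmax - f u') = 0 := by
      rw [Finset.sum_sub_distrib, Finset.sum_const,
        show (G.neighborFinset v).card = d from hreg v, hf v, hv, nsmul_eq_mul, sub_self]
    have := (Finset.sum_eq_zero_iff_of_nonneg
      (fun u' _ => sub_nonneg.2 (hmax u' (Finset.mem_univ _)))).1 hsum0 u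
      ((G.mem_neighborFinset v u).2 hadj)
    linarith
  have walkkey : ∀ (v w : V) (p : G.Walk v w), f v = f vmax → f w = f vmax := by
    intro v w p
    induction p with
    | nil => exact id
    | cons h q ih => intro hv; exact ih (key hv h)
  intro v w
  have h1 := (hconn.preconnected vmax v).elim fun p => walkkey _ _ p rfl
  have h2 := (hconn.preconnected vmax w).elim fun p => walkkey _ _ p rfl
  rw [h1, h2]

/-- If `G` is a connected `(2t)`-regular graph with `t ≥ 1`, then the triangle-multiplier
graph `𝓜₃(G)` is a nut graph. -/
theorem triangleMultiplier_isNut {V : Type*} [Fintype V] (G : SimpleGraph V) (t : ℕ)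
    (ht : 1 ≤ t) (hconn : G.Connected) (hreg : G.IsRegularOfDegree (2 * t)) :
    (G.triangleMultiplier t).IsNut := by
  classical
  have hne : Nonempty V := hconn.nonempty
  set e : (V ⊕ V × Fin t × Fin 2) → ℝ := Sum.elim (fun _ => 1) (fun _ => -1) with he
  have he_ne : e ≠ 0 := by
    intro h
    have := congrFun h (Sum.inl hne.some)
    simp [he] at this
  have he_ker : ((G.triangleMultiplier t).adjMatrix ℝ).mulVec e = 0 := by
    funext w
    rcases w with v | ⟨v, j, k⟩
    · rw [tm_mulVec_inl]
      simp [he, Finset.sum_const, show (G.neighborFinset v).card = 2 * t from hreg v]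

      ring
    · rw [tm_mulVec_inr]
      simp [he]
  have hforward : ∀ x : (V ⊕ V × Fin t × Fin 2) → ℝ,
      ((G.triangleMultiplier t).adjMatrix ℝ).mulVec x = 0 → ∃ c : ℝ, x = c • e := by
    intro x hx
    have hx' : ∀ w, ((G.triangleMultiplier t).adjMatrix ℝ).mulVec x w = 0 :=
      fun w => congrFun hx w
    have hb : ∀ v j k, x (Sum.inr (v, j, k)) = - x (Sum.inl v) := by
      intro v j k
      have h := hx' (Sum.inr (v, j, k + 1))
      rw [tm_mulVec_inr] at h
      have hk : k + 1 + 1 = k := by fin_cases k <;> rfl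
      rw [hk] at h
      linarith
    have ha : ∀ v, ∑ u ∈ G.neighborFinset v, x (Sum.inl u)
        = ((2 * t : ℕ) : ℝ) * x (Sum.inl v) := by
      intro v
      have h := hx' (Sum.inl v)
      rw [tm_mulVec_inl] at h
      simp only [hb, Finset.sum_const, Finset.sum_neg_distrib, Finset.card_univ,
        Fintype.card_fin, nsmul_eq_mul] at h
      push_cast at h ⊢
      linarith
    have hconst := const_of_regular hconn hreg (fun v => x (Sum.inl v)) ha
    refine ⟨x (Sum.inl hne.some), ?_⟩
    funext w
    rcases w with v | ⟨v, j, k⟩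
    · simpa [he] using hconst v hne.some
    · have := hconst v hne.some
      simp only [he, Pi.smul_apply, Sum.elim_inr, smul_eq_mul, mul_neg_one, hb]
      linarith
  have hker_span :
      LinearMap.ker (Matrix.mulVecLin ((G.triangleMultiplier t).adjMatrix ℝ)) = ℝ ∙ e := by
    apply le_antisymm
    · intro x hx
      obtain ⟨c, rfl⟩ := hforward x (by simpa [Matrix.mulVecLin_apply] using hx)
      exact Submodule.smul_mem _ _ (Submodule.mem_span_singleton_self e)
    · rw [Submodule.span_singleton_le_iff_mem]
      simpa [LinearMap.mem_ker, Matrix.mulVecLin_apply] using he_ker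
  refine ⟨?_, ?_, ?_⟩
  · have h1 : 1 ≤ Fintype.card V := Fintype.card_pos
    simp only [Fintype.card_sum, Fintype.card_prod, Fintype.card_fin]
    nlinarith
  · rw [hker_span]
    exact finrank_span_singleton he_ne
  · intro x hx hx0 w
    obtain ⟨c, rfl⟩ := hforward x (by simpa [Matrix.mulVecLin_apply] using hx)
    have hc : c ≠ 0 := by rintro rfl; simp at hx0
    rcases w with v | p <;> simp [he, hc]
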